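/- Let S = ε_1 X_1 + ... + ε_n X_n where X_1, ..., X_n are independent Bernoulli random variables with P(X_j = 1) = p_j and ε_j ∈ {+1, -1} are fixed signs, and let σ = sqrt(Σ_{j=1}^n p_j(1 - p_j)) denote the standard deviation of S. Then for all integers i, σ · P(S = i) ≤ M, where M = sup_{u ≥ 0} sqrt(2u)·e^{-2u}·Σ_{k=0}^∞ (u^k/k!)^2. -/

import Mathlib

open MeasureTheory ProbabilityTheory

/-- `M(u) = √(2u) e^{-2u} Σ_k (u^k/k!)²`. -/
noncomputable def Mfun (u : ℝ) : ℝ :=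
  Real.sqrt (2 * u) * Real.exp (-2 * u) * ∑' k : ℕ, (u ^ k / (Nat.factorial k : ℝ)) ^ 2

/-- `M = sup_{u ≥ 0} M(u)`. -/
noncomputable def Mconst : ℝ := sSup {r : ℝ | ∃ u : ℝ, 0 ≤ u ∧ r = Mfun u}

open MeasureTheory Real Finset


lemma prod_odd_even (k : ℕ) :
    ∏ i ∈ range k, (2 * (i:ℝ) + 1) / (2 * i + 2) = (2*k).factorial / (4^k * (k.factorial:ℝ)^2) := by
  induction k with
  | zero => simp
  | succ m ih =>
    rw [prod_range_succ, ih]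
    have h1 : ((2*(m+1)).factorial : ℝ) = (2*m+2) * ((2*m+1) * (2*m).factorial) := by
      have : 2*(m+1) = (2*m+1)+1 := by ring
      rw [this, Nat.factorial_succ]
      push_cast [Nat.factorial_succ]
      ring
    have h2 : ((m+1).factorial : ℝ) = (m+1) * m.factorial := by
      push_cast [Nat.factorial_succ]; ring
    rw [h1, h2]
    have hm : (m.factorial : ℝ) ≠ 0 := Nat.cast_ne_zero.2 m.factorial_ne_zero
    have h4 : (4:ℝ)^m ≠ 0 := by positivity
    have hm2 : (2*(m:ℝ)+2) ≠ 0 := by positivity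
    field_simp
    ring

lemma cos_pow_periodic (n : ℕ) : Function.Periodic (fun t => Real.cos t ^ n) (2*π) := by
  intro x; simp [Real.cos_add_two_pi]

lemma integral_cos_pow_neg_pi_pi (n : ℕ) :
    ∫ t in (-π)..π, Real.cos t ^ n = (1 + (-1:ℝ)^n) * ∫ x in (0)..π, Real.sin x ^ n := by
  have h2π : (-π) + 2*π = π := by ring
  have hper := (cos_pow_periodic n).intervalIntegral_add_eq (-π) 0
  rw [h2π] at hper
  -- ∫_{-π}^{π} cos^n = ∫_0^{2π} cos^n
  have hshift : (∫ t in (0:ℝ)..(2*π), Real.cos t ^ n) = ∫ t in (π/2)..(2*π+π/2), Real.sin t ^ n := by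
    have : ∀ t:ℝ, Real.cos t ^ n = Real.sin (t + π/2) ^ n := by
      intro t; rw [Real.sin_add_pi_div_two]
    calc (∫ t in (0:ℝ)..(2*π), Real.cos t ^ n) = ∫ t in (0:ℝ)..(2*π), Real.sin (t + π/2) ^ n := by
          simp_rw [this]
      _ = ∫ t in (0+π/2)..(2*π+π/2), Real.sin t ^ n := by
          exact intervalIntegral.integral_comp_add_right (fun t => Real.sin t ^ n) (π/2)
      _ = _ := by norm_num
  have hper2 : (∫ t in (π/2)..(π/2+2*π), Real.sin t ^ n) = ∫ t in (0:ℝ)..(0+2*π), Real.sin t ^ n := by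
    refine Function.Periodic.intervalIntegral_add_eq ?_ _ _
    intro x; simp [Real.sin_add_two_pi]
  have hsplit : (∫ t in (0:ℝ)..(2*π), Real.sin t ^ n)
      = (∫ t in (0:ℝ)..π, Real.sin t ^ n) + ∫ t in π..(2*π), Real.sin t ^ n := by
    rw [intervalIntegral.integral_add_adjacent_intervals] <;>
      exact (Continuous.pow Real.continuous_sin n).intervalIntegrable _ _
  have hsecond : (∫ t in π..(2*π), Real.sin t ^ n) = (-1:ℝ)^n * ∫ x in (0:ℝ)..π, Real.sin x ^ n := by
    have : (∫ t in π..(2*π), Real.sin t ^ n) = ∫ t in (0:ℝ)..π, Real.sin (t + π) ^ n := by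
      rw [intervalIntegral.integral_comp_add_right (fun t => Real.sin t ^ n) π]
      norm_num [two_mul]
    rw [this]
    have : ∀ t:ℝ, Real.sin (t+π) ^ n = (-1:ℝ)^n * Real.sin t ^ n := by
      intro t; rw [Real.sin_add_pi, neg_pow]
    simp_rw [this]
    exact intervalIntegral.integral_const_mul _ _
  have e1 : (2*π+π/2) = π/2 + 2*π := by ring
  rw [hper, zero_add, hshift, e1, hper2, zero_add, hsplit, hsecond]; ring

lemma real_exp_tsum (y : ℝ) : Real.exp y = ∑' n : ℕ, y ^ n / (n.factorial : ℝ) := by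
  rw [Real.exp_eq_exp_ℝ, NormedSpace.exp_eq_tsum_div]

lemma exp_cos_integral (v : ℝ) (hv : 0 ≤ v) :
    ∫ t in (-π)..π, Real.exp (v * Real.cos t)
      = 2 * π * ∑' k : ℕ, ((v/2)^k / (k.factorial : ℝ))^2 := by
  have hle : (-π : ℝ) ≤ π := by linarith [pi_pos]
  haveI hfin : IsFiniteMeasure (volume.restrict (Set.Ioc (-π) π)) :=
    ⟨by rw [Measure.restrict_apply_univ]; exact measure_Ioc_lt_top⟩
  set F : ℕ → ℝ → ℝ := fun n t => (v * Real.cos t) ^ n / (n.factorial : ℝ) with hF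
  have hFcont : ∀ n, Continuous (F n) := fun n => by fun_prop
  have hFbdd : ∀ n t, ‖F n t‖ ≤ v ^ n / (n.factorial : ℝ) := by
    intro n t
    rw [hF]
    simp only [norm_div, norm_pow, Real.norm_eq_abs]
    rw [Nat.abs_cast]
    gcongr
    rw [abs_mul, abs_of_nonneg hv]
    calc v * |Real.cos t| ≤ v * 1 := by gcongr; exact Real.abs_cos_le_one t
      _ = v := mul_one v
  set μ0 := volume.restrict (Set.Ioc (-π) π) with hμ0
  have hTuniv : (μ0 Set.univ).toReal = 2*π := by
    rw [hμ0, Measure.restrict_apply_univ, Real.volume_Ioc, ENNReal.toReal_ofReal (by linarith [pi_pos])]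
    ring
  have hFint : ∀ n, Integrable (F n) μ0 := fun n =>
    (integrable_const (v ^ n / (n.factorial:ℝ))).mono'
      (hFcont n).aestronglyMeasurable (ae_of_all _ (fun t => hFbdd n t))
  have hFsum : Summable fun n => ∫ t, ‖F n t‖ ∂μ0 := by
    apply Summable.of_nonneg_of_le (fun n => integral_nonneg (fun t => norm_nonneg _))
      (fun n => ?_) ((Real.summable_pow_div_factorial v).mul_right (2*π))
    calc (∫ t, ‖F n t‖ ∂μ0) ≤ ∫ _t, v ^ n / (n.factorial:ℝ) ∂μ0 :=
          integral_mono (hFint n).norm (integrable_const _) (fun t => hFbdd n t)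
      _ = v ^ n / (n.factorial:ℝ) * (2*π) := by
          rw [integral_const, smul_eq_mul, measureReal_def, hTuniv]; ring
  have key := integral_tsum_of_summable_integral_norm hFint hFsum
  have hIoc : (∫ t in (-π)..π, Real.exp (v*Real.cos t)) = ∫ t, (∑' n, F n t) ∂μ0 := by
    rw [intervalIntegral.integral_of_le hle, ← hμ0]
    apply integral_congr_ae
    filter_upwards with t
    rw [← real_exp_tsum (v * Real.cos t)]
  rw [hIoc, ← key]
  have hterm : ∀ n, (∫ t, F n t ∂μ0)
      = v^n/(n.factorial:ℝ) * ((1+(-1:ℝ)^n) * ∫ x in (0:ℝ)..π, Real.sin x ^ n) := by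
    intro n
    have hFeq : F n = fun t => v^n/(n.factorial:ℝ) * Real.cos t ^ n := by
      funext t; rw [hF]; simp only [mul_pow]; ring
    rw [hFeq, hμ0, ← intervalIntegral.integral_of_le hle,
      intervalIntegral.integral_const_mul, integral_cos_pow_neg_pi_pi]
  simp_rw [hterm]
  set g : ℕ → ℝ := fun n => v^n/(n.factorial:ℝ) * ((1+(-1:ℝ)^n) * ∫ x in (0:ℝ)..π, Real.sin x ^ n) with hg
  have hinj : Function.Injective (fun k : ℕ => 2*k) := fun a b h => by
    simpa using h
  have hzero : Function.support g ⊆ Set.range (fun k : ℕ => 2*k) := by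
    intro x hx
    rcases Nat.even_or_odd x with he | ho
    · obtain ⟨m, rfl⟩ := he
      exact ⟨m, by simp [two_mul]⟩
    · exfalso
      apply hx
      rw [hg]; simp only [ho.neg_one_pow]; ring
  rw [← Function.Injective.tsum_eq hinj hzero, ← tsum_mul_left]
  apply tsum_congr
  intro k
  have heven : (-1:ℝ)^(2*k) = 1 := by
    rw [pow_mul]; norm_num
  have hs : (∫ x in (0:ℝ)..π, Real.sin x ^ (2*k))
      = π * ((2*k).factorial / (4^k * ((k.factorial:ℝ))^2)) := by
    rw [integral_sin_pow_even, prod_odd_even]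
  show g (2*k) = 2 * π * ((v/2)^k / (k.factorial : ℝ))^2
  rw [hg]
  simp only [heven, hs]
  have h2k : ((2*k).factorial : ℝ) ≠ 0 := Nat.cast_ne_zero.2 (2*k).factorial_ne_zero
  have hk : ((k.factorial) : ℝ) ≠ 0 := Nat.cast_ne_zero.2 k.factorial_ne_zero
  have hv2 : v^(2*k) = (v^k)^2 := by rw [pow_mul]; ring
  have h4 : (4:ℝ)^k = (2^k)^2 := by
    rw [show (4:ℝ) = 2^2 by norm_num, ← pow_mul, ← pow_mul, mul_comm]
  rw [div_pow, div_pow]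
  field_simp
  rw [hv2, h4]
  ring


lemma mfun_eq_integral (u : ℝ) (hu : 0 ≤ u) :
    Mfun u = Real.sqrt (2*u) / (2*π) * ∫ t in (-π)..π, Real.exp (-(2*u)*(1 - Real.cos t)) := by
  have h := exp_cos_integral (2*u) (by linarith)
  have h2 : (2*u)/2 = u := by ring
  rw [h2] at h
  have hπ : (0:ℝ) < π := pi_pos
  rw [Mfun]
  have hsum : (∑' k : ℕ, (u ^ k / (Nat.factorial k : ℝ)) ^ 2)
      = (∫ t in (-π)..π, Real.exp ((2*u) * Real.cos t)) / (2*π) := by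
    rw [h]; field_simp
  rw [hsum]
  have hexp : ∀ t:ℝ, Real.exp (-(2*u)*(1 - Real.cos t))
      = Real.exp (-2*u) * Real.exp ((2*u) * Real.cos t) := by
    intro t; rw [← Real.exp_add]; ring_nf
  simp_rw [hexp]
  rw [intervalIntegral.integral_const_mul]
  field_simp

lemma mfun_le_one (u : ℝ) (hu : 0 ≤ u) : Mfun u ≤ 1 := by
  have hπ : (0:ℝ) < π := pi_pos
  rcases eq_or_lt_of_le hu with rfl | hu'
  · simp [Mfun]
  have hb : (0:ℝ) < 4*u/π^2 := by positivity
  set b := 4*u/π^2 with hbdef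
  have hle : (-π:ℝ) ≤ π := by linarith
  have hcont1 : Continuous fun t => Real.exp (-(2*u)*(1 - Real.cos t)) := by fun_prop
  have hcont2 : Continuous fun t : ℝ => Real.exp (-b*t^2) := by fun_prop
  have hptwise : ∀ t ∈ Set.Icc (-π) π,
      Real.exp (-(2*u)*(1 - Real.cos t)) ≤ Real.exp (-b*t^2) := by
    intro t ht
    apply Real.exp_le_exp.2
    have habs : |t| ≤ π := abs_le.2 ⟨ht.1, ht.2⟩
    have := Real.cos_le_one_sub_mul_cos_sq habs
    rw [hbdef]
    have h1 : 2/π^2*t^2 ≤ 1 - Real.cos t := by linarith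
    have h2 := mul_le_mul_of_nonneg_left h1 (by linarith : (0:ℝ) ≤ 2*u)
    ring_nf at h2 ⊢
    linarith
  have hint1 : (∫ t in (-π)..π, Real.exp (-(2*u)*(1 - Real.cos t)))
      ≤ ∫ t in (-π)..π, Real.exp (-b*t^2) :=
    intervalIntegral.integral_mono_on hle (hcont1.intervalIntegrable _ _)
      (hcont2.intervalIntegrable _ _) hptwise
  have hgauss : (∫ t : ℝ, Real.exp (-b*t^2)) = Real.sqrt (π/b) := integral_gaussian b
  have hint2 : (∫ t in (-π)..π, Real.exp (-b*t^2)) ≤ Real.sqrt (π/b) := by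
    rw [← hgauss, intervalIntegral.integral_of_le hle]
    apply setIntegral_le_integral (integrable_exp_neg_mul_sq hb)
    filter_upwards with t using le_of_lt (Real.exp_pos _)
  rw [mfun_eq_integral u hu]
  have hnn : (0:ℝ) ≤ Real.sqrt (2*u) / (2*π) := by positivity
  calc Real.sqrt (2*u) / (2*π) * ∫ t in (-π)..π, Real.exp (-(2*u)*(1 - Real.cos t))
      ≤ Real.sqrt (2*u) / (2*π) * Real.sqrt (π/b) := by
        apply mul_le_mul_of_nonneg_left (le_trans hint1 hint2) hnn
    _ = Real.sqrt (2*u*(π/b)) / (2*π) := by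
        rw [Real.sqrt_mul (by linarith : (0:ℝ) ≤ 2*u)]; ring
    _ ≤ 1 := by
        have he : 2*u*(π/b) = π^3/2 := by
          rw [hbdef]; field_simp; ring
        rw [he]
        rw [div_le_one (by positivity)]
        have : Real.sqrt (π^3/2) ≤ Real.sqrt ((2*π)^2) := by
          apply Real.sqrt_le_sqrt
          nlinarith [pi_lt_d2]
        calc Real.sqrt (π^3/2) ≤ Real.sqrt ((2*π)^2) := this
          _ = 2*π := Real.sqrt_sq (by linarith)

lemma le_mconst (u : ℝ) (hu : 0 ≤ u) : Mfun u ≤ Mconst := by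
  apply le_csSup
  · exact ⟨1, fun r ⟨w, hw, hrw⟩ => hrw ▸ mfun_le_one w hw⟩
  · exact ⟨u, hu, rfl⟩

open ProbabilityTheory in
lemma indepFun_integral_mul_complex {Ω : Type*} [MeasurableSpace Ω] {μ : Measure Ω}
    {X Y : Ω → ℂ} (h : IndepFun X Y μ) (hX : Integrable X μ) (hY : Integrable Y μ) :
    ∫ ω, X ω * Y ω ∂μ = (∫ ω, X ω ∂μ) * ∫ ω, Y ω ∂μ := by
  have hA : Integrable (fun ω => (X ω).re) μ := hX.re
  have hB : Integrable (fun ω => (X ω).im) μ := hX.im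
  have hC : Integrable (fun ω => (Y ω).re) μ := hY.re
  have hD : Integrable (fun ω => (Y ω).im) μ := hY.im
  have hAC : IndepFun (fun ω => (X ω).re) (fun ω => (Y ω).re) μ :=
    h.comp Complex.measurable_re Complex.measurable_re
  have hAD : IndepFun (fun ω => (X ω).re) (fun ω => (Y ω).im) μ :=
    h.comp Complex.measurable_re Complex.measurable_im
  have hBC : IndepFun (fun ω => (X ω).im) (fun ω => (Y ω).re) μ :=
    h.comp Complex.measurable_im Complex.measurable_re
  have hBD : IndepFun (fun ω => (X ω).im) (fun ω => (Y ω).im) μ :=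
    h.comp Complex.measurable_im Complex.measurable_im
  have eAC := hAC.integral_fun_mul_eq_mul_integral hA.aestronglyMeasurable hC.aestronglyMeasurable
  have eAD := hAD.integral_fun_mul_eq_mul_integral hA.aestronglyMeasurable hD.aestronglyMeasurable
  have eBC := hBC.integral_fun_mul_eq_mul_integral hB.aestronglyMeasurable hC.aestronglyMeasurable
  have eBD := hBD.integral_fun_mul_eq_mul_integral hB.aestronglyMeasurable hD.aestronglyMeasurable
  have hXY : Integrable (fun ω => X ω * Y ω) μ := h.integrable_mul hX hY
  have hACi : Integrable (fun ω => (X ω).re * (Y ω).re) μ := hAC.integrable_mul hA hC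
  have hADi : Integrable (fun ω => (X ω).re * (Y ω).im) μ := hAD.integrable_mul hA hD
  have hBCi : Integrable (fun ω => (X ω).im * (Y ω).re) μ := hBC.integrable_mul hB hC
  have hBDi : Integrable (fun ω => (X ω).im * (Y ω).im) μ := hBD.integrable_mul hB hD
  have cre : ∀ {f : Ω → ℂ}, Integrable f μ → (∫ ω, f ω ∂μ).re = ∫ ω, (f ω).re ∂μ := by
    intro f hf
    simpa only [RCLike.re_to_complex] using (integral_re hf).symm
  have cim : ∀ {f : Ω → ℂ}, Integrable f μ → (∫ ω, f ω ∂μ).im = ∫ ω, (f ω).im ∂μ := by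
    intro f hf
    simpa only [RCLike.im_to_complex] using (integral_im hf).symm
  apply Complex.ext
  · have h1 : (∫ ω, X ω * Y ω ∂μ).re = ∫ ω, (X ω * Y ω).re ∂μ := cre hXY
    rw [h1]
    have h2 : (fun ω => (X ω * Y ω).re)
        = fun ω => (X ω).re * (Y ω).re - (X ω).im * (Y ω).im := by
      funext ω; rw [Complex.mul_re]
    rw [h2, integral_sub hACi hBDi, eAC, eBD, Complex.mul_re, cre hX, cre hY, cim hX, cim hY]
  · have h1 : (∫ ω, X ω * Y ω ∂μ).im = ∫ ω, (X ω * Y ω).im ∂μ := cim hXY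
    rw [h1]
    have h2 : (fun ω => (X ω * Y ω).im)
        = fun ω => (X ω).re * (Y ω).im + (X ω).im * (Y ω).re := by
      funext ω; rw [Complex.mul_im]
    rw [h2, integral_add hADi hBCi, eAD, eBC, Complex.mul_im, cre hX, cre hY, cim hX, cim hY]

open ProbabilityTheory in
lemma iIndep_integral_prod_complex {Ω : Type*} [MeasurableSpace Ω] {μ : Measure Ω}
    [IsProbabilityMeasure μ] {n : ℕ} {g : Fin n → Ω → ℂ}
    (hg : iIndepFun g μ) (hmeas : ∀ j, Measurable (g j))
    (hbdd : ∀ j ω, ‖g j ω‖ ≤ 1) (s : Finset (Fin n)) :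
    ∫ ω, ∏ j ∈ s, g j ω ∂μ = ∏ j ∈ s, ∫ ω, g j ω ∂μ := by
  classical
  have hint : ∀ (t : Finset (Fin n)), Integrable (fun ω => ∏ j ∈ t, g j ω) μ := by
    intro t
    apply (integrable_const (1:ℝ)).mono'
    · exact (Finset.measurable_prod t fun j _ => hmeas j).aestronglyMeasurable
    · filter_upwards with ω
      rw [norm_prod]
      exact Finset.prod_le_one (fun j _ => norm_nonneg _) (fun j _ => hbdd j ω)
  induction s using Finset.induction_on with
  | empty => simp
  | @insert a t ha ih =>
    have hindep : IndepFun (∏ j ∈ t, g j) (g a) μ :=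
      hg.indepFun_finset_prod_of_notMem hmeas ha
    rw [Finset.prod_insert ha]
    have : (fun ω => g a ω * ∏ j ∈ t, g j ω) = fun ω => (∏ j ∈ t, g j ω) * g a ω := by
      funext ω; ring
    simp_rw [Finset.prod_insert ha]
    calc (∫ ω, g a ω * ∏ j ∈ t, g j ω ∂μ) = ∫ ω, (∏ j ∈ t, g j ω) * g a ω ∂μ := by rw [this]
      _ = (∫ ω, ∏ j ∈ t, g j ω ∂μ) * ∫ ω, g a ω ∂μ := by
          have hprodeq : (fun ω => ∏ j ∈ t, g j ω) = ∏ j ∈ t, g j := by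
            funext ω; simp
          apply indepFun_integral_mul_complex _ (hint t) ((integrable_const (1:ℝ)).mono'
            (hmeas a).aestronglyMeasurable (ae_of_all _ fun ω => hbdd a ω))
          rw [hprodeq]; exact hindep
      _ = (∏ j ∈ t, ∫ ω, g j ω ∂μ) * ∫ ω, g a ω ∂μ := by rw [ih]
      _ = (∫ ω, g a ω ∂μ) * ∏ j ∈ t, ∫ ω, g j ω ∂μ := by ring

open ProbabilityTheory in
lemma bernoulli_integral_complex {Ω : Type*} [MeasurableSpace Ω] {μ : Measure Ω}
    [IsProbabilityMeasure μ] {Y : Ω → ℝ} (hY : Measurable Y) (hval : ∀ ω, Y ω = 0 ∨ Y ω = 1)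
    {p : ℝ} (hp : p ∈ Set.Icc (0:ℝ) 1) (hdist : μ {ω | Y ω = 1} = ENNReal.ofReal p)
    (f : ℝ → ℂ) (hf : Measurable f) :
    ∫ ω, f (Y ω) ∂μ = ((1-p : ℝ) : ℂ) * f 0 + (p : ℂ) * f 1 := by
  have hA : MeasurableSet {ω | Y ω = 1} := hY (measurableSet_singleton 1)
  set A := {ω | Y ω = 1} with hAdef
  have hmuA : (μ A).toReal = p := by rw [hdist, ENNReal.toReal_ofReal hp.1]
  have hmuAc : (μ Aᶜ).toReal = 1 - p := by
    have h1 : μ Aᶜ = 1 - μ A := by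
      rw [measure_compl hA (measure_ne_top μ A), measure_univ]
    rw [h1, hdist, ← ENNReal.ofReal_one, ← ENNReal.ofReal_sub 1 hp.1,
      ENNReal.toReal_ofReal (by linarith [hp.2])]
  have hsplit : (fun ω => f (Y ω))
      = fun ω => (A.indicator (fun _ => f 1) ω + Aᶜ.indicator (fun _ => f 0) ω) := by
    funext ω
    by_cases h : ω ∈ A
    · rw [Set.indicator_of_mem h, Set.indicator_of_notMem (by simpa using h)]
      have : Y ω = 1 := h
      rw [this, add_zero]
    · rw [Set.indicator_of_notMem h, Set.indicator_of_mem (by simpa using h)]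
      have : Y ω = 0 := by rcases hval ω with h0 | h1; exact h0; exact absurd h1 h
      rw [this, zero_add]
  rw [hsplit, integral_add, integral_indicator_const _ hA, integral_indicator_const _ hA.compl,
    measureReal_def, measureReal_def, hmuA, hmuAc]
  · simp only [smul_eq_mul, Complex.real_smul]
    ring
  · exact (integrable_const _).indicator hA
  · exact (integrable_const _).indicator hA.compl

lemma norm_bern_char {p : ℝ} (hp : p ∈ Set.Icc (0:ℝ) 1) (s : ℝ) :
    ‖((1-p : ℝ):ℂ) + (p:ℂ) * Complex.exp ((s:ℂ) * Complex.I)‖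
      ≤ Real.exp (-(p*(1-p))*(1 - Real.cos s)) := by
  have hz : ((1-p : ℝ):ℂ) + (p:ℂ) * Complex.exp ((s:ℂ) * Complex.I)
      = ((1-p+p*Real.cos s : ℝ):ℂ) + ((p*Real.sin s : ℝ):ℂ) * Complex.I := by
    rw [Complex.exp_mul_I, ← Complex.ofReal_cos, ← Complex.ofReal_sin]
    push_cast
    ring
  rw [hz, Complex.norm_add_mul_I]
  set a := 1-p+p*Real.cos s
  set b := p*Real.sin s
  set w := p*(1-p)*(1 - Real.cos s) with hw
  have hw0 : 0 ≤ w := by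
    have := Real.cos_le_one s
    have := hp.1; have := hp.2
    apply mul_nonneg (mul_nonneg hp.1 (by linarith)) (by linarith)
  have hab : a^2 + b^2 = 1 - 2*w := by
    have hs2 : Real.sin s^2 = 1 - Real.cos s^2 := Real.sin_sq s
    simp only [a, b, hw]
    rw [mul_pow, hs2]
    ring
  have hle : a^2 + b^2 ≤ Real.exp (-w)^2 := by
    rw [hab, sq, ← Real.exp_add]
    have h1 := Real.add_one_le_exp (-w + -w)
    linarith
  calc Real.sqrt (a^2+b^2) ≤ Real.sqrt (Real.exp (-w)^2) := Real.sqrt_le_sqrt hle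
    _ = Real.exp (-w) := Real.sqrt_sq (le_of_lt (Real.exp_pos _))
    _ = Real.exp (-(p*(1-p))*(1 - Real.cos s)) := by rw [hw]; ring_nf

lemma cintegral_re {Ω : Type*} [MeasurableSpace Ω] {μ : Measure Ω} {f : Ω → ℂ}
    (hf : Integrable f μ) : (∫ ω, f ω ∂μ).re = ∫ ω, (f ω).re ∂μ := by
  simpa only [RCLike.re_to_complex] using (integral_re hf).symm

open ProbabilityTheory in
theorem uniform_bound_signed_bernoulli_sum'
    {Ω : Type*} [MeasurableSpace Ω] (μ : Measure Ω) [IsProbabilityMeasure μ]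
    (n : ℕ) (p : Fin n → ℝ) (hp : ∀ j, p j ∈ Set.Icc (0 : ℝ) 1)
    (ε : Fin n → ℝ) (hε : ∀ j, ε j = 1 ∨ ε j = -1)
    (X : Fin n → Ω → ℝ) (hX : ∀ j, Measurable (X j))
    (hval : ∀ j ω, X j ω = 0 ∨ X j ω = 1)
    (hind : iIndepFun X μ)
    (hdist : ∀ j, μ {ω | X j ω = 1} = ENNReal.ofReal (p j))
    (i : ℤ) :
    Real.sqrt (∑ j, p j * (1 - p j)) *
      (μ {ω | ∑ j, ε j * X j ω = (i : ℝ)}).toReal ≤ Mconst := by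
  classical
  have hπ : (0:ℝ) < π := pi_pos
  set S : Ω → ℝ := fun ω => ∑ j, ε j * X j ω with hSdef
  have hS : Measurable S := Finset.measurable_sum _ (fun j _ => measurable_const.mul (hX j))
  set v : ℝ := ∑ j, p j * (1 - p j) with hvdef
  have hv0 : 0 ≤ v :=
    Finset.sum_nonneg fun j _ => mul_nonneg (hp j).1 (by linarith [(hp j).2])
  have hsetEq : {ω | ∑ j, ε j * X j ω = (i : ℝ)} = {ω | S ω = (i:ℝ)} := rfl
  have hA : MeasurableSet {ω | S ω = (i:ℝ)} := hS (measurableSet_singleton _)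
  -- S - i is integer valued
  have hintval : ∀ ω, ∃ m : ℤ, S ω - i = (m:ℝ) := by
    intro ω
    have h1 : ∀ j, ∃ mj : ℤ, ε j * X j ω = (mj:ℝ) := by
      intro j
      rcases hval j ω with h0 | h1
      · exact ⟨0, by rw [h0]; simp⟩
      · rcases hε j with he | he
        · exact ⟨1, by rw [h1, he]; simp⟩
        · exact ⟨-1, by rw [h1, he]; push_cast; ring⟩
    choose m hm using h1
    refine ⟨(∑ j, m j) - i, ?_⟩
    have : S ω = ∑ j, (m j : ℝ) := by
      rw [hSdef]
      exact Finset.sum_congr rfl (fun j _ => hm j)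
    rw [this]
    push_cast
    ring
  -- Step 1: characteristic function bound
  have step1 : ∀ t : ℝ, (∫ ω, Real.cos (t * (S ω - i)) ∂μ)
      ≤ Real.exp (-v * (1 - Real.cos t)) := by
    intro t
    set g : Fin n → Ω → ℂ :=
      fun j ω => Complex.exp (((t * ε j * X j ω : ℝ) : ℂ) * Complex.I) with hgdef
    have hgm : ∀ j, Measurable fun x : ℝ => Complex.exp (((t * ε j * x : ℝ) : ℂ) * Complex.I) := by
      intro j
      apply Complex.measurable_exp.comp
      apply Measurable.mul_const
      exact Complex.measurable_ofReal.comp (measurable_const.mul measurable_id)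
    have hgmeas : ∀ j, Measurable (g j) := fun j => (hgm j).comp (hX j)
    have hgbdd : ∀ j ω, ‖g j ω‖ ≤ 1 := by
      intro j ω
      rw [hgdef]
      simp only [Complex.norm_exp_ofReal_mul_I]
      exact le_rfl
    have hgindep : iIndepFun g μ :=
      hind.comp (fun j => fun x : ℝ => Complex.exp (((t * ε j * x : ℝ) : ℂ) * Complex.I)) hgm
    have hE : ∀ j, (∫ ω, g j ω ∂μ)
        = ((1 - p j : ℝ):ℂ) + ((p j : ℝ) : ℂ) * Complex.exp (((t * ε j : ℝ):ℂ) * Complex.I) := by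
      intro j
      have hb := bernoulli_integral_complex (hX j) (hval j) (hp j) (hdist j)
        (fun x => Complex.exp (((t * ε j * x : ℝ):ℂ) * Complex.I)) (hgm j)
      rw [hgdef]
      simp only []
      rw [hb]
      norm_num
    have hnorm : ∀ j, ‖∫ ω, g j ω ∂μ‖
        ≤ Real.exp (-(p j * (1 - p j)) * (1 - Real.cos t)) := by
      intro j
      rw [hE j]
      have hnb := norm_bern_char (hp j) (t * ε j)
      have hcos : Real.cos (t * ε j) = Real.cos t := by
        rcases hε j with he | he
        · rw [he, mul_one]
        · rw [he, mul_neg, mul_one, Real.cos_neg]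
      rw [hcos] at hnb
      exact hnb
    have hexp_meas : Measurable fun ω => Complex.exp (((t * (S ω - i) : ℝ):ℂ) * Complex.I) := by
      apply Complex.measurable_exp.comp
      apply Measurable.mul_const
      exact Complex.measurable_ofReal.comp (measurable_const.mul (hS.sub measurable_const))
    have hexp_int : Integrable (fun ω => Complex.exp (((t * (S ω - i) : ℝ):ℂ) * Complex.I)) μ :=
      (integrable_const (1:ℝ)).mono' hexp_meas.aestronglyMeasurable
        (ae_of_all _ fun ω => by
          rw [Complex.norm_exp_ofReal_mul_I])
    have hfact : (∫ ω, Complex.exp (((t * (S ω - i) : ℝ):ℂ) * Complex.I) ∂μ)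
        = Complex.exp (((-(t*i) : ℝ):ℂ) * Complex.I) * ∏ j, ∫ ω, g j ω ∂μ := by
      have hsplit : ∀ ω, Complex.exp (((t * (S ω - i) : ℝ):ℂ) * Complex.I)
          = Complex.exp (((-(t*i) : ℝ):ℂ) * Complex.I) * ∏ j, g j ω := by
        intro ω
        rw [hgdef]
        simp only []
        rw [← Complex.exp_sum, ← Complex.exp_add]
        congr 1
        have hr : t * (S ω - ↑i) = -(t*↑i) + ∑ j, t * ε j * X j ω := by
          rw [hSdef]
          simp only [mul_sub, Finset.mul_sum]
          ring
        rw [show ((t * (S ω - ↑i) : ℝ):ℂ) = ((-(t*↑i) + ∑ j, t * ε j * X j ω : ℝ):ℂ) from by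
          rw [hr]]
        push_cast
        rw [add_mul, Finset.sum_mul]
      calc (∫ ω, Complex.exp (((t * (S ω - i) : ℝ):ℂ) * Complex.I) ∂μ)
          = ∫ ω, Complex.exp (((-(t*i) : ℝ):ℂ) * Complex.I) * ∏ j, g j ω ∂μ := by
            apply integral_congr_ae; filter_upwards with ω; rw [hsplit ω]
        _ = Complex.exp (((-(t*i) : ℝ):ℂ) * Complex.I) * ∫ ω, ∏ j, g j ω ∂μ :=
            integral_const_mul _ _
        _ = _ := by rw [iIndep_integral_prod_complex hgindep hgmeas hgbdd Finset.univ]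
    have hnormE : ‖∫ ω, Complex.exp (((t * (S ω - i) : ℝ):ℂ) * Complex.I) ∂μ‖
        ≤ Real.exp (-v * (1 - Real.cos t)) := by
      rw [hfact, norm_mul, Complex.norm_exp_ofReal_mul_I,
        one_mul]
      calc ‖∏ j, ∫ ω, g j ω ∂μ‖ = ∏ j, ‖∫ ω, g j ω ∂μ‖ := norm_prod _ _
        _ ≤ ∏ j, Real.exp (-(p j * (1 - p j)) * (1 - Real.cos t)) :=
            Finset.prod_le_prod (fun j _ => norm_nonneg _) (fun j _ => hnorm j)
        _ = Real.exp (∑ j, -(p j * (1 - p j)) * (1 - Real.cos t)) := (Real.exp_sum _ _).symm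
        _ = Real.exp (-v * (1 - Real.cos t)) := by
            congr 1
            rw [hvdef, ← Finset.sum_mul, ← Finset.sum_neg_distrib]
    have hre : (∫ ω, Real.cos (t * (S ω - i)) ∂μ)
        = (∫ ω, Complex.exp (((t * (S ω - i) : ℝ):ℂ) * Complex.I) ∂μ).re := by
      rw [cintegral_re hexp_int]
      apply integral_congr_ae
      filter_upwards with ω
      rw [Complex.exp_ofReal_mul_I_re]
    rw [hre]
    exact le_trans (Complex.re_le_norm _) (by exact hnormE)
  -- Step 2 : Fourier inversion via Fubini
  haveI hfin : IsFiniteMeasure (volume.restrict (Set.Ioc (-π) π)) :=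
    ⟨by rw [Measure.restrict_apply_univ]; exact measure_Ioc_lt_top⟩
  set ν := volume.restrict (Set.Ioc (-π) π) with hν
  have hKmeas : Measurable (fun q : ℝ × Ω => Real.cos (q.1 * (S q.2 - i))) :=
    Real.measurable_cos.comp
      (measurable_fst.mul ((hS.comp measurable_snd).sub measurable_const))
  have hKint : Integrable (fun q : ℝ × Ω => Real.cos (q.1 * (S q.2 - i))) (ν.prod μ) :=
    (integrable_const (1:ℝ)).mono' hKmeas.aestronglyMeasurable
      (ae_of_all _ fun q => by rw [Real.norm_eq_abs]; exact Real.abs_cos_le_one _)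
  have hswap := MeasureTheory.integral_integral_swap
    (f := fun t ω => Real.cos (t * (S ω - i))) hKint
  have hinner : ∀ ω, (∫ t, Real.cos (t * (S ω - i)) ∂ν)
      = Set.indicator {ω' | S ω' = (i:ℝ)} (fun _ => 2*π) ω := by
    intro ω
    obtain ⟨m, hm⟩ := hintval ω
    have hIeq : (∫ t, Real.cos (t * (S ω - i)) ∂ν)
        = ∫ t in (-π)..π, Real.cos (t * (S ω - i)) := by
      rw [hν, intervalIntegral.integral_of_le (by linarith)]
    rw [hIeq]
    by_cases hc : S ω = (i:ℝ)
    · have h0 : S ω - i = 0 := by rw [hc]; ring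
      simp only [h0, mul_zero, Real.cos_zero]
      rw [intervalIntegral.integral_const, Set.indicator_of_mem (show ω ∈ {ω' | S ω' = (i:ℝ)} from hc)]
      simp only [smul_eq_mul, mul_one]
      ring
    · rw [Set.indicator_of_notMem (show ω ∉ {ω' | S ω' = (i:ℝ)} from hc)]
      have hm0 : (m:ℝ) ≠ 0 := by
        rw [← hm]
        intro h
        exact hc (by linarith [sub_eq_zero.1 h])
      have hcomm : ∀ t:ℝ, Real.cos (t * (S ω - i)) = Real.cos ((m:ℝ) * t) := by
        intro t; rw [hm, mul_comm]
      simp_rw [hcomm]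
      rw [intervalIntegral.integral_comp_mul_left Real.cos hm0, integral_cos]
      have h1 : Real.sin ((m:ℝ)*π) = 0 := Real.sin_int_mul_pi m
      have h2 : Real.sin ((m:ℝ)*(-π)) = 0 := by rw [mul_neg, Real.sin_neg, h1, neg_zero]
      rw [h1, h2]
      simp
  have hfubini : (∫ t, (∫ ω, Real.cos (t * (S ω - i)) ∂μ) ∂ν)
      = 2*π*(μ {ω' | S ω' = (i:ℝ)}).toReal := by
    rw [hswap]
    have : (fun ω => ∫ t, Real.cos (t * (S ω - i)) ∂ν)
        = Set.indicator {ω' | S ω' = (i:ℝ)} (fun _ => (2*π:ℝ)) := funext hinner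
    rw [this, integral_indicator_const _ hA, smul_eq_mul, measureReal_def]
    ring
  -- Step 3: compare
  have hmarg : Integrable (fun t => ∫ ω, Real.cos (t * (S ω - i)) ∂μ) ν :=
    hKint.integral_prod_left
  have hexpint : Integrable (fun t => Real.exp (-v*(1-Real.cos t))) ν :=
    (integrable_const (1:ℝ)).mono'
      (by fun_prop : Continuous fun t => Real.exp (-v*(1-Real.cos t))).aestronglyMeasurable
      (ae_of_all _ fun t => by
        rw [Real.norm_eq_abs, abs_of_pos (Real.exp_pos _)]
        apply Real.exp_le_one_iff.2
        nlinarith [Real.cos_le_one t])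
  have hcmp : (∫ t, (∫ ω, Real.cos (t * (S ω - i)) ∂μ) ∂ν)
      ≤ ∫ t, Real.exp (-v*(1-Real.cos t)) ∂ν :=
    integral_mono hmarg hexpint (fun t => step1 t)
  have hExpEq : (∫ t, Real.exp (-v*(1-Real.cos t)) ∂ν)
      = ∫ t in (-π)..π, Real.exp (-v*(1-Real.cos t)) := by
    rw [hν, intervalIntegral.integral_of_le (by linarith)]
  have hP : 2*π*(μ {ω' | S ω' = (i:ℝ)}).toReal
      ≤ ∫ t in (-π)..π, Real.exp (-v*(1-Real.cos t)) := by
    rw [← hExpEq, ← hfubini]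
    exact hcmp
  have hMf : Mfun (v/2)
      = Real.sqrt v/(2*π) * ∫ t in (-π)..π, Real.exp (-v*(1-Real.cos t)) := by
    have h := mfun_eq_integral (v/2) (by linarith)
    rw [show 2*(v/2) = v by ring] at h
    exact h
  rw [hsetEq]
  calc Real.sqrt v * (μ {ω' | S ω' = (i:ℝ)}).toReal
      = Real.sqrt v/(2*π) * (2*π*(μ {ω' | S ω' = (i:ℝ)}).toReal) := by
        field_simp
    _ ≤ Real.sqrt v/(2*π) * ∫ t in (-π)..π, Real.exp (-v*(1-Real.cos t)) := by
        apply mul_le_mul_of_nonneg_left hP (by positivity)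
    _ = Mfun (v/2) := hMf.symm
    _ ≤ Mconst := le_mconst _ (by linarith)

theorem uniform_bound_signed_bernoulli_sum
    {Ω : Type*} [MeasurableSpace Ω] (μ : Measure Ω) [IsProbabilityMeasure μ]
    (n : ℕ) (p : Fin n → ℝ) (hp : ∀ j, p j ∈ Set.Icc (0 : ℝ) 1)
    (ε : Fin n → ℝ) (hε : ∀ j, ε j = 1 ∨ ε j = -1)
    (X : Fin n → Ω → ℝ) (hX : ∀ j, Measurable (X j))
    (hval : ∀ j ω, X j ω = 0 ∨ X j ω = 1)
    (hind : iIndepFun X μ)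
    (hdist : ∀ j, μ {ω | X j ω = 1} = ENNReal.ofReal (p j))
    (i : ℤ) :
    Real.sqrt (∑ j, p j * (1 - p j)) *
      (μ {ω | ∑ j, ε j * X j ω = (i : ℝ)}).toReal ≤ Mconst :=
  uniform_bound_signed_bernoulli_sum' μ n p hp ε hε X hX hval hind hdist i
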